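/- For positive integers n₁,…,n_k and a divisor δ of lcm(n₁,…,n_k), the number of cyclic subgroups of order δ of ℤ_{n₁} × ⋯ × ℤ_{n_k} equals (1/φ(δ)) · Σ_{e ∣ δ} gcd(e,n₁)⋯gcd(e,n_k)·μ(δ/e). -/

import Mathlib

open Finset AddSubgroup

lemma card_nsmul_eq_zero_cyclic (A : Type*) [AddCommGroup A] [Fintype A] [DecidableEq A]
    [IsAddCyclic A] {e : ℕ} (he : e ≠ 0) :
    #{a : A | e • a = 0} = Nat.gcd e (Fintype.card A) := by
  have hg : Nat.gcd e (Fintype.card A) ≠ 0 := Nat.gcd_ne_zero_left he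
  have key : ∀ a : A, e • a = 0 ↔ (Nat.gcd e (Fintype.card A)) • a = 0 := by
    intro a
    rw [← addOrderOf_dvd_iff_nsmul_eq_zero, ← addOrderOf_dvd_iff_nsmul_eq_zero, Nat.dvd_gcd_iff]
    exact ⟨fun h => ⟨h, addOrderOf_dvd_card⟩, fun h => h.1⟩
  have h1 : #{a : A | e • a = 0} = #{a : A | (Nat.gcd e (Fintype.card A)) • a = 0} := by
    exact congrArg Finset.card (Finset.filter_congr fun a _ => key a)
  rw [h1, ← sum_card_addOrderOf_eq_card_nsmul_eq_zero hg]
  conv_rhs => rw [← Nat.sum_totient (Nat.gcd e (Fintype.card A))]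
  apply Finset.sum_congr rfl
  intro m hm
  exact IsAddCyclic.card_addOrderOf_eq_totient
    ((Nat.mem_divisors.mp hm).1.trans (Nat.gcd_dvd_right _ _))

lemma stepA (G : Type*) [AddCommGroup G] [Fintype G] (δ : ℕ) :
    Nat.card {g : G // addOrderOf g = δ} =
      Nat.card {H : AddSubgroup G //
        (∃ g, H = AddSubgroup.closure {g}) ∧ Nat.card H = δ} * δ.totient := by
  classical
  have hfin : Finite (AddSubgroup G) :=
    Finite.of_injective (fun H => (H : Set G)) SetLike.coe_injective
  set T := {H : AddSubgroup G // (∃ g, H = AddSubgroup.closure {g}) ∧ Nat.card H = δ} with hT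
  haveI : Fintype T := Fintype.ofFinite T
  let f : {g : G // addOrderOf g = δ} → T := fun g =>
    ⟨AddSubgroup.closure {g.1}, ⟨g.1, rfl⟩, by
      rw [← zmultiples_eq_closure, Nat.card_zmultiples, g.2]⟩
  have hfib : ∀ t : T, Nat.card {g : {g : G // addOrderOf g = δ} // f g = t} = δ.totient := by
    rintro ⟨H, ⟨g₀, hg₀⟩, hcard⟩
    haveI hcyc : IsAddCyclic H := by
      subst hg₀
      rw [← zmultiples_eq_closure]
      refine ⟨⟨g₀, mem_zmultiples g₀⟩, ?_⟩
      rintro ⟨x, m, rfl⟩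
      exact ⟨m, Subtype.ext (by simp)⟩
    have e1 : {g : {g : G // addOrderOf g = δ} // f g = (⟨H, ⟨g₀, hg₀⟩, hcard⟩ : T)} ≃
        {h : H // addOrderOf h = δ} :=
      { toFun := fun g => ⟨⟨g.1.1, by
          have h2 : AddSubgroup.closure {g.1.1} = H := congrArg Subtype.val g.2
          have h3 : (g.1.1 : G) ∈ AddSubgroup.closure ({g.1.1} : Set G) :=
            AddSubgroup.subset_closure rfl
          rwa [h2] at h3⟩, by
          rw [AddSubgroup.addOrderOf_mk]; exact g.1.2⟩
        invFun := fun h => ⟨⟨h.1.1, by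
          have := h.2; rwa [AddSubgroup.addOrderOf_mk] at this⟩, by
          apply Subtype.ext
          show AddSubgroup.closure {h.1.1} = H
          have hle : AddSubgroup.closure {h.1.1} ≤ H := by
            rw [AddSubgroup.closure_le, Set.singleton_subset_iff]; exact h.1.2
          refine AddSubgroup.eq_of_le_of_card_ge hle ?_
          rw [hcard, ← zmultiples_eq_closure, Nat.card_zmultiples]
          have := h.2; rw [AddSubgroup.addOrderOf_mk] at this
          rw [this]⟩
        left_inv := fun g => Subtype.ext (Subtype.ext rfl)
        right_inv := fun h => Subtype.ext (Subtype.ext rfl) }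
    rw [Nat.card_congr e1]
    haveI : Fintype H := Fintype.ofFinite H
    rw [Nat.card_eq_fintype_card, Fintype.card_subtype]
    exact IsAddCyclic.card_addOrderOf_eq_totient
      (by rw [← Nat.card_eq_fintype_card, hcard])
  calc Nat.card {g : G // addOrderOf g = δ}
      = ∑ t : T, Nat.card {g : {g : G // addOrderOf g = δ} // f g = t} := by
        rw [Nat.card_congr (Equiv.sigmaFiberEquiv f).symm, Nat.card_eq_fintype_card,
          Fintype.card_sigma]
        exact Finset.sum_congr rfl fun t _ => (Nat.card_eq_fintype_card).symm
    _ = ∑ _t : T, δ.totient := Finset.sum_congr rfl fun t _ => hfib t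
    _ = Nat.card T * δ.totient := by
        simp [Nat.card_eq_fintype_card, Finset.card_univ, mul_comm]

lemma card_sols (k : ℕ) (n : Fin k → ℕ) [∀ i, NeZero (n i)] {e : ℕ} (he : e ≠ 0) :
    #{g : ∀ i, ZMod (n i) | e • g = 0} = ∏ i, Nat.gcd e (n i) := by
  classical
  have h1 : ∀ g : ∀ i, ZMod (n i), e • g = 0 ↔ ∀ i, e • g i = 0 := by
    intro g; rw [funext_iff]; simp
  calc #{g : ∀ i, ZMod (n i) | e • g = 0}
      = #{g : ∀ i, ZMod (n i) | ∀ i, e • g i = 0} :=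
        congrArg Finset.card (Finset.filter_congr fun g _ => h1 g)
    _ = Fintype.card {g : ∀ i, ZMod (n i) // ∀ i, e • g i = 0} := (Fintype.card_subtype _).symm
    _ = ∏ i, Fintype.card {x : ZMod (n i) // e • x = 0} := by
        rw [Fintype.card_congr
          (Equiv.subtypePiEquivPi (β := fun i => ZMod (n i)) (p := fun i x => e • x = 0)),
          Fintype.card_pi]
    _ = ∏ i, Nat.gcd e (n i) := by
        refine Finset.prod_congr rfl fun i _ => ?_
        rw [Fintype.card_subtype, card_nsmul_eq_zero_cyclic _ he, ZMod.card]

theorem cyclic_subgroup_count_of_order (k : ℕ) (n : Fin k → ℕ) (hn : ∀ i, 0 < n i)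
    (δ : ℕ) (hδ : δ ∣ Finset.univ.lcm n) :
    (Nat.card {H : AddSubgroup (∀ i, ZMod (n i)) //
        (∃ g, H = AddSubgroup.closure {g}) ∧ Nat.card H = δ} : ℚ) =
      (1 / (Nat.totient δ : ℚ)) *
        ∑ e ∈ δ.divisors, (∏ i, (Nat.gcd e (n i) : ℚ)) *
          (ArithmeticFunction.moebius (δ / e) : ℚ) := by
  classical
  haveI : ∀ i, NeZero (n i) := fun i => ⟨(hn i).ne'⟩
  have hδ0 : δ ≠ 0 := by
    rintro rfl
    have h0 : Finset.univ.lcm n = 0 := Nat.eq_zero_of_zero_dvd hδ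
    rw [Finset.lcm_eq_zero_iff] at h0
    obtain ⟨i, -, hi⟩ := h0
    exact (hn i).ne' hi
  have htot : (Nat.totient δ : ℚ) ≠ 0 :=
    Nat.cast_ne_zero.mpr (Nat.totient_pos.mpr (Nat.pos_of_ne_zero hδ0)).ne'
  have hsum : ∀ m : ℕ, 0 < m → ∑ d ∈ m.divisors,
      ((#{g : ∀ i, ZMod (n i) | addOrderOf g = d} : ℕ) : ℚ) = ∏ i, (Nat.gcd m (n i) : ℚ) := by
    intro m hm
    rw [← Nat.cast_sum, ← Nat.cast_prod]
    congr 1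
    rw [← card_sols k n hm.ne', ← sum_card_addOrderOf_eq_card_nsmul_eq_zero hm.ne']
  have hmob := (ArithmeticFunction.sum_eq_iff_sum_smul_moebius_eq
      (f := fun d => ((#{g : ∀ i, ZMod (n i) | addOrderOf g = d} : ℕ) : ℚ))
      (g := fun m => ∏ i, (Nat.gcd m (n i) : ℚ))).mp hsum δ (Nat.pos_of_ne_zero hδ0)
  rw [Nat.sum_divisorsAntidiagonal'
    (f := fun a b => (ArithmeticFunction.moebius a) • (∏ i, (Nat.gcd b (n i) : ℚ)))] at hmob
  have hA' : ((#{g : ∀ i, ZMod (n i) | addOrderOf g = δ} : ℕ) : ℚ) =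
      (Nat.card {H : AddSubgroup (∀ i, ZMod (n i)) //
        (∃ g, H = AddSubgroup.closure {g}) ∧ Nat.card H = δ} : ℚ) * (Nat.totient δ : ℚ) := by
    have h := stepA (∀ i, ZMod (n i)) δ
    rw [Nat.card_eq_fintype_card, Fintype.card_subtype] at h
    exact_mod_cast congrArg (fun x : ℕ => (x : ℚ)) h
  rw [one_div, ← div_eq_inv_mul, eq_div_iff htot]
  rw [← hA', ← hmob]
  apply Finset.sum_congr rfl
  intro e _
  rw [zsmul_eq_mul, mul_comm]
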